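/- Under the SGD setup with f satisfying the Polyak–Łojasiewicz inequality with constant μ > 0, with constant adjustment factors ψ_k = 1 and constant mini-batch size b_k = b, if 0 < h ≤ 1/L then for every k ≥ 0: E[f(x_k) − f(x⋆)] ≤ (1 − hμ)^k · (f(x₀) − f(x⋆)) + L d σ⋆² h / (2 b μ); in particular limsup_{k→∞} E[f(x_k) − f(x⋆)] ≤ L d σ⋆² h / (2 μ b). -/

import Mathlib

open MeasureTheory Filter

section Aux

variable {d : ℕ}

local notation "E" => EuclideanSpace ℝ (Fin d)

lemma inner_gradient_eq' (f : E → ℝ) (z v : E) :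
    (inner ℝ (gradient f z) v : ℝ) = fderiv ℝ f z v := by
  simp [gradient, InnerProductSpace.toDual_symm_apply]

lemma descent_lemma (f : E → ℝ) (L : ℝ) (hf : ContDiff ℝ 1 f)
    (hL : ∀ p q : E, ‖gradient f p - gradient f q‖ ≤ L * ‖p - q‖)
    (p q : E) :
    f q ≤ f p + (inner ℝ (gradient f p) (q - p) : ℝ) + L / 2 * ‖q - p‖ ^ 2 := by
  have hdf : Differentiable ℝ f := hf.differentiable one_ne_zero
  set v := q - p with hv
  set g : ℝ → ℝ := fun t =>
    f (p + t • v) - t * (inner ℝ (gradient f p) v : ℝ) - L * t ^ 2 / 2 * ‖v‖ ^ 2 with hg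
  have hγ : ∀ t : ℝ, HasDerivAt (fun t : ℝ => p + t • v) v t := fun t => by
    simpa using ((hasDerivAt_id t).smul_const v).const_add p
  have hgd : ∀ t : ℝ, HasDerivAt g
      ((inner ℝ (gradient f (p + t • v)) v : ℝ) - (inner ℝ (gradient f p) v : ℝ)
        - L * t * ‖v‖ ^ 2) t := by
    intro t
    have h1 : HasDerivAt (fun t : ℝ => f (p + t • v)) (fderiv ℝ f (p + t • v) v) t :=
      (hdf (p + t • v)).hasFDerivAt.comp_hasDerivAt t (hγ t)
    have h2 : HasDerivAt (fun t : ℝ => t * (inner ℝ (gradient f p) v : ℝ))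
        ((inner ℝ (gradient f p) v : ℝ)) t := by
      simpa using (hasDerivAt_id t).mul_const ((inner ℝ (gradient f p) v : ℝ))
    have h3 : HasDerivAt (fun t : ℝ => L * t ^ 2 / 2 * ‖v‖ ^ 2) (L * t * ‖v‖ ^ 2) t := by
      have := ((hasDerivAt_pow 2 t).const_mul L).div_const 2
      have h4 := this.mul_const (‖v‖ ^ 2)
      refine h4.congr_deriv ?_
      ring
    have := (h1.sub h2).sub h3
    rw [inner_gradient_eq']
    exact this
  have hanti : AntitoneOn g (Set.Icc (0:ℝ) 1) := by
    apply antitoneOn_of_deriv_nonpos (convex_Icc (0:ℝ) 1)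
    · exact (fun t _ => ((hgd t).differentiableAt).continuousAt.continuousWithinAt)
    · exact (fun t _ => ((hgd t).differentiableAt).differentiableWithinAt)
    · intro t ht
      rw [interior_Icc] at ht
      rw [(hgd t).deriv]
      have h5 : (inner ℝ (gradient f (p + t • v)) v : ℝ) - (inner ℝ (gradient f p) v : ℝ)
          = (inner ℝ (gradient f (p + t • v) - gradient f p) v : ℝ) := by
        rw [inner_sub_left]
      have h6 : (inner ℝ (gradient f (p + t • v) - gradient f p) v : ℝ)
          ≤ ‖gradient f (p + t • v) - gradient f p‖ * ‖v‖ := real_inner_le_norm _ _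
      have h7 : ‖gradient f (p + t • v) - gradient f p‖ ≤ L * (t * ‖v‖) := by
        have := hL (p + t • v) p
        simpa [norm_smul, abs_of_pos ht.1] using this
      have hv0 : (0:ℝ) ≤ ‖v‖ := norm_nonneg _
      nlinarith [ht.1.le]
  have h01 : g 1 ≤ g 0 := hanti (Set.mem_Icc.2 ⟨le_rfl, zero_le_one⟩)
    (Set.mem_Icc.2 ⟨zero_le_one, le_rfl⟩) zero_le_one
  have e1 : p + (1:ℝ) • v = q := by simp [hv]
  have hg0 : g 0 = f p := by
    show f (p + (0:ℝ) • v) - 0 * (inner ℝ (gradient f p) v : ℝ) - L * 0 ^ 2 / 2 * ‖v‖ ^ 2 = f p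
    simp
  have hg1 : g 1 = f q - (inner ℝ (gradient f p) v : ℝ) - L / 2 * ‖v‖ ^ 2 := by
    show f (p + (1:ℝ) • v) - 1 * (inner ℝ (gradient f p) v : ℝ) - L * 1 ^ 2 / 2 * ‖v‖ ^ 2
      = f q - (inner ℝ (gradient f p) v : ℝ) - L / 2 * ‖v‖ ^ 2
    rw [e1]; ring
  rw [hg0, hg1] at h01
  linarith
end Aux

section Aux2
variable {d : ℕ}
local notation "E" => EuclideanSpace ℝ (Fin d)

lemma gradient_min_zero (f : E → ℝ) (xstar : E) (hmin : ∀ z, f xstar ≤ f z) :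
    gradient f xstar = 0 := by
  have hlm : IsLocalMin f xstar := (isMinOn_univ_iff.mpr hmin).isLocalMin Filter.univ_mem
  have := hlm.fderiv_eq_zero
  rw [gradient, this]
  simp


lemma grad_sq_le_aux (f : E → ℝ) (L : ℝ) (hf : ContDiff ℝ 1 f)
    (hL : ∀ p q : E, ‖gradient f p - gradient f q‖ ≤ L * ‖p - q‖) (hLpos : 0 < L)
    (xstar : E) (hmin : ∀ z, f xstar ≤ f z) (z : E) :
    ‖gradient f z‖ ^ 2 ≤ 2 * L * (f z - f xstar) := by
  have hd := descent_lemma f L hf hL z (z - L⁻¹ • gradient f z)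
  have hm := hmin (z - L⁻¹ • gradient f z)
  set g := gradient f z with hgdef
  have e1 : z - L⁻¹ • g - z = -(L⁻¹ • g) := by abel
  rw [e1] at hd
  have e2 : (inner ℝ g (-(L⁻¹ • g)) : ℝ) = -(L⁻¹ * ‖g‖ ^ 2) := by
    rw [inner_neg_right, real_inner_smul_right, real_inner_self_eq_norm_sq]
  have e3 : ‖-(L⁻¹ • g)‖ ^ 2 = L⁻¹ ^ 2 * ‖g‖ ^ 2 := by
    rw [norm_neg, norm_smul, Real.norm_eq_abs, abs_of_pos (inv_pos.2 hLpos)]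
    ring
  rw [e2, e3] at hd
  have h1 : -(L⁻¹ * ‖g‖ ^ 2) + L / 2 * (L⁻¹ ^ 2 * ‖g‖ ^ 2) = -(‖g‖ ^ 2 / (2 * L)) := by
    field_simp
    ring
  have key : f xstar ≤ f z - ‖g‖ ^ 2 / (2 * L) := by linarith
  have h2 : ‖g‖ ^ 2 / (2 * L) ≤ f z - f xstar := by linarith
  calc ‖g‖ ^ 2 = ‖g‖ ^ 2 / (2 * L) * (2 * L) := by field_simp
    _ ≤ (f z - f xstar) * (2 * L) := mul_le_mul_of_nonneg_right h2 (by positivity)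
    _ = 2 * L * (f z - f xstar) := by ring

lemma f_upper_aux (f : E → ℝ) (L : ℝ) (hf : ContDiff ℝ 1 f)
    (hL : ∀ p q : E, ‖gradient f p - gradient f q‖ ≤ L * ‖p - q‖)
    (xstar : E) (hmin : ∀ z, f xstar ≤ f z) (z : E) :
    f z - f xstar ≤ L / 2 * ‖z - xstar‖ ^ 2 := by
  have hd := descent_lemma f L hf hL xstar z
  rw [gradient_min_zero f xstar hmin, inner_zero_left] at hd
  linarith
end Aux2

lemma integrable_inner_memL2 {Ω : Type*} [MeasurableSpace Ω] {μ : Measure Ω}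
    {F : Type*} [NormedAddCommGroup F] [InnerProductSpace ℝ F]
    {f g : Ω → F} (hf : MemLp f 2 μ) (hg : MemLp g 2 μ) :
    Integrable (fun ω => (inner ℝ (f ω) (g ω) : ℝ)) μ := by
  have h0 := L2.integrable_inner (𝕜 := ℝ) (hf.toLp f) (hg.toLp g)
  apply h0.congr
  filter_upwards [hf.coeFn_toLp, hg.coeFn_toLp] with ω h1 h2
  rw [h1, h2]

lemma integrable_mul_memL2 {Ω : Type*} [MeasurableSpace Ω] {μ : Measure Ω}
    {f g : Ω → ℝ} (hf : MemLp f 2 μ) (hg : MemLp g 2 μ) :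
    Integrable (fun ω => f ω * g ω) μ := by
  simpa [RCLike.inner_apply, conj_trivial, mul_comm] using integrable_inner_memL2 hf hg

lemma integral_inner_eq_zero_of_condexp_zero {Ω : Type*} {m : MeasurableSpace Ω}
    {m0 : MeasurableSpace Ω}
    {μ : Measure Ω} [IsProbabilityMeasure μ] (hm : m ≤ m0)
    {d : ℕ} {c e : Ω → EuclideanSpace ℝ (Fin d)}
    (hc : Measurable[m] c) (hc2 : MemLp c 2 μ) (he2 : MemLp e 2 μ)
    (hem : μ[e | m] =ᵐ[μ] fun _ => (0 : EuclideanSpace ℝ (Fin d))) :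
    ∫ ω, (inner ℝ (c ω) (e ω) : ℝ) ∂μ = 0 := by
  haveI : SigmaFinite (μ.trim hm) := by
    infer_instance
  have he_int : Integrable e μ := he2.integrable one_le_two
  -- set integrals of e over m-measurable sets vanish
  have hset : ∀ s, MeasurableSet[m] s → ∫ ω in s, e ω ∂μ = 0 := by
    intro s hs
    rw [← setIntegral_condExp hm he_int hs]
    calc ∫ ω in s, (μ[e|m]) ω ∂μ
        = ∫ ω in s, (0 : EuclideanSpace ℝ (Fin d)) ∂μ :=
          integral_congr_ae (ae_restrict_of_ae hem)
      _ = 0 := by simp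
  have hproj2 : ∀ (i : Fin d) {g : Ω → EuclideanSpace ℝ (Fin d)}, MemLp g 2 μ →
      MemLp (fun ω => g ω i) 2 μ := by
    intro i g hg
    have h1 := (EuclideanSpace.proj (𝕜 := ℝ) i).comp_memLp' hg
    refine (memLp_congr_ae ?_).mp h1
    filter_upwards with ω
    simp [Function.comp]
  have hprod_int : ∀ i : Fin d, Integrable (fun ω => c ω i * e ω i) μ := by
    intro i
    exact integrable_mul_memL2 (hproj2 i hc2) (hproj2 i he2)
  have hcoord : ∀ i : Fin d, ∫ ω, c ω i * e ω i ∂μ = 0 := by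
    intro i
    have hei_int : Integrable (fun ω => e ω i) μ := ((hproj2 i he2).integrable one_le_two)
    have hcondei : μ[(fun ω => e ω i) | m] =ᵐ[μ] fun _ => (0:ℝ) := by
      refine (ae_eq_condExp_of_forall_setIntegral_eq hm hei_int
        (fun s _ _ => (integrable_zero _ _ _).integrableOn) ?_ ?_).symm
      · intro s hs hμs
        have h2 : ∫ ω in s, e ω i ∂μ
            = (EuclideanSpace.proj (𝕜 := ℝ) i) (∫ ω in s, e ω ∂μ) := by
          rw [← ContinuousLinearMap.integral_comp_comm _ he_int.integrableOn]
          refine integral_congr_ae ?_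
          filter_upwards with ω
          simp
        rw [h2, hset s hs]
        simp
      · exact stronglyMeasurable_const.aestronglyMeasurable
    have hci_sm : StronglyMeasurable[m] (fun ω => c ω i) := by
      have : Measurable[m] (fun ω => c ω i) :=
        ((EuclideanSpace.proj (𝕜 := ℝ) i).continuous.measurable).comp hc
      exact this.stronglyMeasurable
    have hpull : μ[(fun ω => c ω i * e ω i) | m] =ᵐ[μ]
        fun ω => c ω i * (μ[(fun ω => e ω i) | m]) ω :=
      condExp_mul_of_stronglyMeasurable_left hci_sm (hprod_int i) hei_int
    calc ∫ ω, c ω i * e ω i ∂μ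
        = ∫ ω, (μ[(fun ω => c ω i * e ω i) | m]) ω ∂μ :=
          (integral_condExp hm).symm
      _ = ∫ ω, (0:ℝ) ∂μ := by
          refine integral_congr_ae ?_
          filter_upwards [hpull, hcondei] with ω h1 h2
          rw [h1, h2, mul_zero]
      _ = 0 := by simp
  have hexpand : (fun ω => (inner ℝ (c ω) (e ω) : ℝ))
      = fun ω => ∑ i : Fin d, c ω i * e ω i := by
    funext ω
    simp [PiLp.inner_apply, RCLike.inner_apply, conj_trivial, mul_comm]
  rw [hexpand, integral_finset_sum _ (fun i _ => hprod_int i)]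
  simp [hcoord]
set_option maxHeartbeats 1600000 in
/-- **Ball of convergence for constant-stepsize mini-batch SGD on Polyak–Łojasiewicz
functions.** With constant adjustment factors `ψ_k = 1` and constant mini-batch size `b`,
if `0 < h ≤ 1/L` then for every `k`,
`E[f(x_k) − f(x⋆)] ≤ (1 − hμ)^k (f(x₀) − f(x⋆)) + L d σ⋆² h/(2 b μ)`,
and in particular `limsup_{k→∞} E[f(x_k) − f(x⋆)] ≤ L d σ⋆² h/(2 μ b)`. -/
theorem sgd_constant_step_pl_ball_of_convergence
    {Ω : Type*} {m0 : MeasurableSpace Ω} {μ : Measure Ω} [IsProbabilityMeasure μ]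
    {d : ℕ} (f : EuclideanSpace ℝ (Fin d) → ℝ) (L : ℝ)
    (hf : ContDiff ℝ 1 f)
    (hL : ∀ x y : EuclideanSpace ℝ (Fin d), ‖gradient f x - gradient f y‖ ≤ L * ‖x - y‖)
    (xstar : EuclideanSpace ℝ (Fin d)) (hmin : ∀ x, f xstar ≤ f x)
    (μpl : ℝ) (hμpl : 0 < μpl)
    (hpl : ∀ z : EuclideanSpace ℝ (Fin d), 2 * μpl * (f z - f xstar) ≤ ‖gradient f z‖ ^ 2)
    (ℱ : Filtration ℕ m0)
    (x G : ℕ → Ω → EuclideanSpace ℝ (Fin d))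
    (x0 : EuclideanSpace ℝ (Fin d)) (hx0 : x 0 = fun _ => x0)
    (hx_meas : ∀ k, Measurable[ℱ k] (x k))
    (σsq : ℝ) (hσsq : 0 ≤ σsq)
    (b : ℝ) (hb : 1 ≤ b)
    (h : ℝ) (hh : 0 < h)
    (hupdate : ∀ k ω, x (k + 1) ω = x k ω - h • G k ω)
    (hG2 : ∀ k, MemLp (G k) 2 μ)
    (hGmean : ∀ k, μ[G k | ℱ k] =ᵐ[μ] fun ω => gradient f (x k ω))
    (hGvar : ∀ k, ∀ᵐ ω ∂μ,
      (μ[fun ω' => ‖G k ω' - gradient f (x k ω')‖ ^ 2 | ℱ k]) ω ≤ d * σsq / b)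
    (hhL : h ≤ 1 / L) :
    (∀ k : ℕ, ∫ ω, (f (x k ω) - f xstar) ∂μ ≤
        (1 - h * μpl) ^ k * (f x0 - f xstar) + L * d * σsq * h / (2 * b * μpl)) ∧
      limsup (fun k : ℕ => ∫ ω, (f (x k ω) - f xstar) ∂μ) atTop ≤
        L * d * σsq * h / (2 * μpl * b) := by

  classical
  have hLpos : 0 < L := one_div_pos.mp (lt_of_lt_of_le hh hhL)
  have hbpos : (0:ℝ) < b := lt_of_lt_of_le one_pos hb
  by_cases hconst : ∀ z : EuclideanSpace ℝ (Fin d), f z = f xstar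
  · have hzero : ∀ k, ∫ ω, (f (x k ω) - f xstar) ∂μ = 0 := by
      intro k
      have : (fun ω => f (x k ω) - f xstar) = fun _ => (0:ℝ) := by
        funext ω; rw [hconst (x k ω)]; ring
      rw [this, integral_zero]
    constructor
    · intro k
      rw [hzero k, hconst x0]
      have : f xstar - f xstar = 0 := by ring
      rw [this, mul_zero, zero_add]
      positivity
    · simp only [hzero, limsup_const]
      positivity
  · push_neg at hconst
    obtain ⟨z0, hz0⟩ := hconst
    have hz0pos : 0 < f z0 - f xstar := sub_pos.2 (lt_of_le_of_ne (hmin z0) (Ne.symm hz0))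
    have hμL : μpl ≤ L := by
      have h1 := hpl z0
      have h2 := grad_sq_le_aux f L hf hL hLpos xstar hmin z0
      nlinarith
    have hhL1 : h * L ≤ 1 := by
      rw [le_div_iff₀ hLpos] at hhL; exact hhL
    -- measurability
    have hmE : ∀ k, Measurable (x k) := fun k => (hx_meas k).mono (ℱ.le k) le_rfl
    have hcontg : Continuous (fun z : EuclideanSpace ℝ (Fin d) => gradient f z) := by
      have h1 : Continuous (fderiv ℝ f) := hf.continuous_fderiv one_ne_zero
      exact (LinearIsometryEquiv.continuous _).comp h1
    have hgm : ∀ k, Measurable[ℱ k] (fun ω => gradient f (x k ω)) := fun k =>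
      hcontg.measurable.comp (hx_meas k)
    have hgmE : ∀ k, Measurable (fun ω => gradient f (x k ω)) := fun k =>
      hcontg.measurable.comp (hmE k)
    -- L² and integrability facts
    have hx2 : ∀ k, MemLp (x k) 2 μ := by
      intro k; induction k with
      | zero => rw [hx0]; exact memLp_const x0
      | succ n ih =>
          have hxe : x (n+1) = x n - h • G n := funext fun ω => hupdate n ω
          rw [hxe]; exact ih.sub ((hG2 n).const_smul h)
    have hxsub2 : ∀ k, MemLp (fun ω => x k ω - xstar) 2 μ := fun k =>
      (hx2 k).sub (memLp_const xstar)
    have hnormsq_int : ∀ k, Integrable (fun ω => ‖x k ω - xstar‖ ^ 2) μ := fun k =>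
      (memLp_two_iff_integrable_sq_norm (hxsub2 k).aestronglyMeasurable).mp (hxsub2 k)
    have hfx_int : ∀ k, Integrable (fun ω => f (x k ω) - f xstar) μ := by
      intro k
      refine Integrable.mono' ((hnormsq_int k).const_mul (L / 2)) ?_ ?_
      · exact ((hf.continuous.measurable.comp (hmE k)).sub measurable_const).aestronglyMeasurable
      · refine Filter.Eventually.of_forall fun ω => ?_
        rw [Real.norm_eq_abs, abs_of_nonneg (sub_nonneg.2 (hmin _))]
        exact f_upper_aux f L hf hL xstar hmin (x k ω)
    have hgradsq_int : ∀ k, Integrable (fun ω => ‖gradient f (x k ω)‖ ^ 2) μ := by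
      intro k
      refine Integrable.mono' ((hfx_int k).const_mul (2 * L)) ?_ ?_
      · exact (((hgmE k).norm).pow_const 2).aestronglyMeasurable
      · refine Filter.Eventually.of_forall fun ω => ?_
        rw [Real.norm_eq_abs, abs_of_nonneg (by positivity)]
        exact grad_sq_le_aux f L hf hL hLpos xstar hmin (x k ω)
    have hgrad2 : ∀ k, MemLp (fun ω => gradient f (x k ω)) 2 μ := fun k =>
      (memLp_two_iff_integrable_sq_norm (hgmE k).aestronglyMeasurable).mpr (hgradsq_int k)
    have hgrad_int : ∀ k, Integrable (fun ω => gradient f (x k ω)) μ := fun k =>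
      (hgrad2 k).integrable one_le_two
    have hG_int : ∀ k, Integrable (G k) μ := fun k => (hG2 k).integrable one_le_two
    have he2 : ∀ k, MemLp (fun ω => G k ω - gradient f (x k ω)) 2 μ := fun k =>
      (hG2 k).sub (hgrad2 k)
    have he_int : ∀ k, Integrable (fun ω => G k ω - gradient f (x k ω)) μ := fun k =>
      (he2 k).integrable one_le_two
    have hesq_int : ∀ k, Integrable (fun ω => ‖G k ω - gradient f (x k ω)‖ ^ 2) μ := fun k =>
      (memLp_two_iff_integrable_sq_norm (he2 k).aestronglyMeasurable).mp (he2 k)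
    have hinner_int : ∀ k, Integrable
        (fun ω => (inner ℝ (gradient f (x k ω)) (G k ω - gradient f (x k ω)) : ℝ)) μ := fun k =>
      integrable_inner_memL2 (hgrad2 k) (he2 k)
    -- cross term vanishes
    have hcross : ∀ k, ∫ ω,
        (inner ℝ (gradient f (x k ω)) (G k ω - gradient f (x k ω)) : ℝ) ∂μ = 0 := by
      intro k
      refine integral_inner_eq_zero_of_condexp_zero (ℱ.le k) (hgm k) (hgrad2 k) (he2 k) ?_
      have hcsm : StronglyMeasurable[ℱ k] (fun ω => gradient f (x k ω)) :=
        (hgm k).stronglyMeasurable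
      have hcondc : μ[(fun ω => gradient f (x k ω)) | ℱ k] = fun ω => gradient f (x k ω) :=
        condExp_of_stronglyMeasurable (ℱ.le k) hcsm (hgrad_int k)
      have h1 := condExp_sub (m := ℱ k) (hG_int k) (hgrad_int k)
      have heq : (fun ω => G k ω - gradient f (x k ω))
          = G k - fun ω => gradient f (x k ω) := rfl
      rw [heq]
      filter_upwards [h1, hGmean k] with ω h1ω h2ω
      rw [h1ω, Pi.sub_apply, h2ω, hcondc]
      simp
    -- noise bound
    have hnoise : ∀ k, ∫ ω, ‖G k ω - gradient f (x k ω)‖ ^ 2 ∂μ ≤ ↑d * σsq / b := by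
      intro k
      rw [← integral_condExp (ℱ.le k) (f := fun ω => ‖G k ω - gradient f (x k ω)‖ ^ 2)]
      calc ∫ ω, (μ[(fun ω' => ‖G k ω' - gradient f (x k ω')‖ ^ 2) | ℱ k]) ω ∂μ
          ≤ ∫ _, (↑d * σsq / b : ℝ) ∂μ :=
            integral_mono_ae integrable_condExp (integrable_const _) (hGvar k)
        _ = ↑d * σsq / b := by simp
    -- expected noise squared is nonnegative
    have hesq_nonneg : ∀ k, 0 ≤ ∫ ω, ‖G k ω - gradient f (x k ω)‖ ^ 2 ∂μ := fun k =>
      integral_nonneg fun ω => by positivity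
    have hgradsq_nonneg : ∀ k, 0 ≤ ∫ ω, ‖gradient f (x k ω)‖ ^ 2 ∂μ := fun k =>
      integral_nonneg fun ω => by positivity
    have hA_nonneg : ∀ k, 0 ≤ ∫ ω, (f (x k ω) - f xstar) ∂μ := fun k =>
      integral_nonneg fun ω => sub_nonneg.2 (hmin _)
    -- PL inequality in expectation
    have hPL : ∀ k, 2 * μpl * ∫ ω, (f (x k ω) - f xstar) ∂μ
        ≤ ∫ ω, ‖gradient f (x k ω)‖ ^ 2 ∂μ := by
      intro k
      rw [← integral_const_mul]
      exact integral_mono ((hfx_int k).const_mul _) (hgradsq_int k) fun ω => hpl (x k ω)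
    -- one-step recursion
    have hrec : ∀ k, ∫ ω, (f (x (k+1) ω) - f xstar) ∂μ
        ≤ (1 - h * μpl) * ∫ ω, (f (x k ω) - f xstar) ∂μ + L * h ^ 2 / 2 * (↑d * σsq / b) := by
      intro k
      have hpt : ∀ ω, f (x (k+1) ω) - f xstar ≤
          (f (x k ω) - f xstar) + ((L * h ^ 2 / 2 - h) * ‖gradient f (x k ω)‖ ^ 2
            + ((L * h ^ 2 - h) * (inner ℝ (gradient f (x k ω)) (G k ω - gradient f (x k ω)) : ℝ)
            + L * h ^ 2 / 2 * ‖G k ω - gradient f (x k ω)‖ ^ 2)) := by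
        intro ω
        have hd := descent_lemma f L hf hL (x k ω) (x (k+1) ω)
        rw [hupdate k ω] at hd
        have e1 : x k ω - h • G k ω - x k ω = -(h • G k ω) := by abel
        rw [e1] at hd
        have e2 : (inner ℝ (gradient f (x k ω)) (-(h • G k ω)) : ℝ)
            = -(h * (inner ℝ (gradient f (x k ω)) (G k ω) : ℝ)) := by
          rw [inner_neg_right, real_inner_smul_right]
        have e3 : ‖-(h • G k ω)‖ ^ 2 = h ^ 2 * ‖G k ω‖ ^ 2 := by
          rw [norm_neg, norm_smul, Real.norm_eq_abs, abs_of_pos hh]; ring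
        rw [e2, e3] at hd
        have hGdecomp : G k ω = gradient f (x k ω) + (G k ω - gradient f (x k ω)) := by abel
        have e4 : (inner ℝ (gradient f (x k ω)) (G k ω) : ℝ)
            = ‖gradient f (x k ω)‖ ^ 2
              + (inner ℝ (gradient f (x k ω)) (G k ω - gradient f (x k ω)) : ℝ) := by
          conv_lhs => rw [hGdecomp]
          rw [inner_add_right, real_inner_self_eq_norm_sq]
        have e5 : ‖G k ω‖ ^ 2 = ‖gradient f (x k ω)‖ ^ 2
            + 2 * (inner ℝ (gradient f (x k ω)) (G k ω - gradient f (x k ω)) : ℝ)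
            + ‖G k ω - gradient f (x k ω)‖ ^ 2 := by
          conv_lhs => rw [hGdecomp]
          rw [← norm_add_sq_real]
        rw [e4, e5] at hd
        rw [hupdate k ω]
        nlinarith [hd]
      have hi2 : Integrable (fun ω => (L * h ^ 2 / 2 - h) * ‖gradient f (x k ω)‖ ^ 2) μ :=
        (hgradsq_int k).const_mul _
      have hi3 : Integrable (fun ω => (L * h ^ 2 - h)
          * (inner ℝ (gradient f (x k ω)) (G k ω - gradient f (x k ω)) : ℝ)) μ :=
        (hinner_int k).const_mul _
      have hi4 : Integrable (fun ω => L * h ^ 2 / 2 * ‖G k ω - gradient f (x k ω)‖ ^ 2) μ :=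
        (hesq_int k).const_mul _
      have hi34 : Integrable (fun ω => (L * h ^ 2 - h)
          * (inner ℝ (gradient f (x k ω)) (G k ω - gradient f (x k ω)) : ℝ)
          + L * h ^ 2 / 2 * ‖G k ω - gradient f (x k ω)‖ ^ 2) μ := hi3.add hi4
      have hi234 : Integrable (fun ω => (L * h ^ 2 / 2 - h) * ‖gradient f (x k ω)‖ ^ 2
          + ((L * h ^ 2 - h)
             * (inner ℝ (gradient f (x k ω)) (G k ω - gradient f (x k ω)) : ℝ)
             + L * h ^ 2 / 2 * ‖G k ω - gradient f (x k ω)‖ ^ 2)) μ := hi2.add hi34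
      have hint_rhs : Integrable (fun ω =>
          (f (x k ω) - f xstar) + ((L * h ^ 2 / 2 - h) * ‖gradient f (x k ω)‖ ^ 2
            + ((L * h ^ 2 - h) * (inner ℝ (gradient f (x k ω)) (G k ω - gradient f (x k ω)) : ℝ)
            + L * h ^ 2 / 2 * ‖G k ω - gradient f (x k ω)‖ ^ 2))) μ := (hfx_int k).add hi234
      have hstep := integral_mono (hfx_int (k+1)) hint_rhs hpt
      rw [integral_add (hfx_int k) hi234, integral_add hi2 hi34, integral_add hi3 hi4,
        integral_const_mul, integral_const_mul, integral_const_mul, hcross k, mul_zero] at hstep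
      have hcoef1 : L * h ^ 2 / 2 - h ≤ -(h / 2) := by nlinarith
      have hcoef2 : (0:ℝ) ≤ L * h ^ 2 / 2 := by positivity
      nlinarith [hstep, hPL k, hnoise k, hesq_nonneg k, hgradsq_nonneg k, hA_nonneg k,
        mul_le_mul_of_nonneg_right hcoef1 (hgradsq_nonneg k),
        mul_le_mul_of_nonneg_left (hnoise k) hcoef2,
        mul_le_mul_of_nonneg_left (hPL k) (le_of_lt (half_pos hh))]
    -- closed-form bound by induction
    have hA0eq : ∫ ω, (f (x 0 ω) - f xstar) ∂μ = f x0 - f xstar := by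
      have hc : (fun ω : Ω => f (x 0 ω) - f xstar) = fun _ => f x0 - f xstar := by rw [hx0]
      rw [hc, integral_const, probReal_univ]
      simp
    have hq0 : 0 ≤ 1 - h * μpl := by nlinarith
    have hq1 : 1 - h * μpl < 1 := by nlinarith
    have hD0 : 0 ≤ L * ↑d * σsq * h / (2 * b * μpl) := by positivity
    have hDC : (1 - h * μpl) * (L * ↑d * σsq * h / (2 * b * μpl)) + L * h ^ 2 / 2 * (↑d * σsq / b)
        = L * ↑d * σsq * h / (2 * b * μpl) := by
      field_simp
      ring
    have hbound : ∀ k, ∫ ω, (f (x k ω) - f xstar) ∂μ ≤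
        (1 - h * μpl) ^ k * (f x0 - f xstar) + L * ↑d * σsq * h / (2 * b * μpl) := by
      intro k; induction k with
      | zero => rw [hA0eq, pow_zero, one_mul]; linarith
      | succ n ih =>
          calc ∫ ω, (f (x (n+1) ω) - f xstar) ∂μ
              ≤ (1 - h * μpl) * ∫ ω, (f (x n ω) - f xstar) ∂μ
                + L * h ^ 2 / 2 * (↑d * σsq / b) := hrec n
            _ ≤ (1 - h * μpl) * ((1 - h * μpl) ^ n * (f x0 - f xstar)
                  + L * ↑d * σsq * h / (2 * b * μpl)) + L * h ^ 2 / 2 * (↑d * σsq / b) := by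
                have := mul_le_mul_of_nonneg_left ih hq0
                linarith
            _ = (1 - h * μpl) ^ (n+1) * (f x0 - f xstar)
                + ((1 - h * μpl) * (L * ↑d * σsq * h / (2 * b * μpl))
                  + L * h ^ 2 / 2 * (↑d * σsq / b)) := by ring
            _ = (1 - h * μpl) ^ (n+1) * (f x0 - f xstar)
                + L * ↑d * σsq * h / (2 * b * μpl) := by rw [hDC]
    refine ⟨hbound, ?_⟩
    -- limsup bound
    have htend : Tendsto (fun k : ℕ => (1 - h * μpl) ^ k * (f x0 - f xstar)
        + L * ↑d * σsq * h / (2 * b * μpl)) atTop (nhds (L * ↑d * σsq * h / (2 * b * μpl))) := by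
      have h1 : Tendsto (fun k : ℕ => (1 - h * μpl) ^ k) atTop (nhds 0) :=
        tendsto_pow_atTop_nhds_zero_of_lt_one hq0 hq1
      have h2 := (h1.mul_const (f x0 - f xstar)).add_const (L * ↑d * σsq * h / (2 * b * μpl))
      rw [zero_mul, zero_add] at h2
      exact h2
    have hls := limsup_le_limsup (Filter.Eventually.of_forall hbound)
      (isCoboundedUnder_le_of_le atTop fun k => hA_nonneg k)
      htend.isBoundedUnder_le
    rw [htend.limsup_eq] at hls
    calc limsup (fun k : ℕ => ∫ ω, (f (x k ω) - f xstar) ∂μ) atTop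
        ≤ L * ↑d * σsq * h / (2 * b * μpl) := hls
      _ = L * ↑d * σsq * h / (2 * μpl * b) := by ring
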